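/- For every n ≥ 1, the expected total number E_n of branches (the sum over all r ≥ 0 of the number of r-branches) in a uniformly random binary tree of size n is given exactly by E_n = ((n+1)/binom(2n,n)) · Σ_{k=1}^{n+1} (2 - 2^{-v₂(k)}) · k · [ binom(2n, n+1-k) - 2·binom(2n, n-k) + binom(2n, n-1-k) ], where v₂(k) is the 2-adic valuation of k, i.e., the largest ν such that 2^ν divides k. -/

import Mathlib

/-- A binary tree is either a leaf `□` or an internal node with two subtrees. -/
inductive BTree : Type
  | leaf : BTree
  | node : BTree → BTree → BTree
deriving DecidableEq

namespace BTree

/-- The size of a binary tree: its number of internal nodes. -/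
def size : BTree → ℕ
  | leaf => 0
  | node t₁ t₂ => t₁.size + t₂.size + 1

/-- The register function (Horton–Strahler number) of a binary tree; it is also the
label attached to the root.  Every node `v` of a tree is labeled by the register
function of the subtree rooted at `v`. -/
def reg : BTree → ℕ
  | leaf => 0
  | node t₁ t₂ => if t₁.reg = t₂.reg then t₁.reg + 1 else max t₁.reg t₂.reg

/-- The number of `r`-branches of a binary tree, i.e. the number of maximal chains of
nodes labeled `r`.  Each maximal chain is counted at its topmost node: a node labeled
`r` is the top of a chain iff it is the root or its parent is not labeled `r`. -/
def branches (r : ℕ) : BTree → ℕ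
  | leaf => if r = 0 then 1 else 0
  | node t₁ t₂ =>
      branches r t₁ + branches r t₂
        + (if (node t₁ t₂).reg = r then 1 else 0)
        - (if (node t₁ t₂).reg = r ∧ t₁.reg = r then 1 else 0)
        - (if (node t₁ t₂).reg = r ∧ t₂.reg = r then 1 else 0)

end BTree

/-- `E n r` is the expected number of `r`-branches in a uniformly random binary
tree of size `n` (all `catalan n` trees of size `n` being equally likely). -/
noncomputable def branchExpectation (n r : ℕ) : ℝ :=
  (∑' t : {t : BTree // t.size = n}, (BTree.branches r t.1 : ℝ)) / (catalan n : ℝ)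

/-- The total number of branches of a binary tree, i.e. the sum over all `r ≥ 0` of the
number of `r`-branches (all branches have label at most `reg t`, so the sum is finite). -/
def BTree.totalBranches (t : BTree) : ℕ :=
  ∑ r ∈ Finset.range (t.reg + 1), t.branches r

/-- `E n` is the expected total number of branches in a uniformly random binary tree of
size `n`. -/
noncomputable def totalBranchExpectation (n : ℕ) : ℝ :=
  (∑' t : {t : BTree // t.size = n}, (BTree.totalBranches t.1 : ℝ)) / (catalan n : ℝ)

/-- `zchoose n k` is the binomial coefficient `binom(n, k)` for an integer lower
index `k`, with the convention that it vanishes for negative `k`. -/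
def zchoose (n : ℕ) (k : ℤ) : ℕ :=
  if 0 ≤ k then n.choose k.toNat else 0

namespace BB
open BTree Finset

open Finset.HasAntidiagonal.antidiagonal (fst_le snd_le)

/-- All trees of size `n`. -/
def treesOf : ℕ → Finset BTree
  | 0 => {BTree.leaf}
  | n + 1 =>
    (antidiagonal n).attach.biUnion fun ijh =>
      ((treesOf ijh.1.1) ×ˢ (treesOf ijh.1.2)).map
        ⟨fun x => BTree.node x.1 x.2, fun ⟨x₁, x₂⟩ ⟨y₁, y₂⟩ h => by simpa using h⟩
  decreasing_by
    · have := fst_le ijh.2; omega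
    · have := snd_le ijh.2; omega

@[simp] theorem treesOf_zero : treesOf 0 = {BTree.leaf} := by rw [treesOf]

theorem treesOf_succ (n : ℕ) :
    treesOf (n + 1) =
      (antidiagonal n).biUnion fun ij =>
        ((treesOf ij.1) ×ˢ (treesOf ij.2)).map
          ⟨fun x => BTree.node x.1 x.2, fun ⟨x₁, x₂⟩ ⟨y₁, y₂⟩ h => by simpa using h⟩ := by
  rw [treesOf]
  ext
  simp

@[simp]
theorem mem_treesOf {x : BTree} {n : ℕ} : x ∈ treesOf n ↔ x.size = n := by
  induction x generalizing n with
  | leaf => cases n <;> simp [treesOf_succ, size]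
  | node t₁ t₂ ih₁ ih₂ =>
      cases n with
      | zero => simp [size]
      | succ n =>
          simp only [treesOf_succ, size, Finset.mem_biUnion, Finset.mem_map,
            Finset.mem_product, Function.Embedding.coeFn_mk, Finset.HasAntidiagonal.mem_antidiagonal,
            Prod.exists]
          constructor
          · rintro ⟨a, b, hab, ⟨x, y, ⟨hx, hy⟩, h⟩⟩
            cases h
            rw [ih₁] at hx; rw [ih₂] at hy; omega
          · intro h
            exact ⟨t₁.size, t₂.size, by omega, t₁, t₂, ⟨ih₁.mpr rfl, ih₂.mpr rfl⟩, rfl⟩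

/-- Summing a function over all trees of size `n+1` by root decomposition. -/
theorem sum_treesOf_succ {M : Type*} [AddCommMonoid M] (n : ℕ) (f : BTree → M) :
    ∑ t ∈ treesOf (n + 1), f t =
      ∑ ij ∈ antidiagonal n, ∑ t₁ ∈ treesOf ij.1, ∑ t₂ ∈ treesOf ij.2, f (BTree.node t₁ t₂) := by
  rw [treesOf_succ, Finset.sum_biUnion]
  · refine Finset.sum_congr rfl fun ij _ => ?_
    rw [Finset.sum_map, Finset.sum_product]
    rfl
  · intro p hp q hq hpq
    simp only [Finset.disjoint_left]
    rintro x hx hx'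
    simp only [Finset.mem_map, Finset.mem_product, Function.Embedding.coeFn_mk] at hx hx'
    obtain ⟨⟨a, b⟩, ⟨ha, hb⟩, rfl⟩ := hx
    obtain ⟨⟨a', b'⟩, ⟨ha', hb'⟩, h⟩ := hx'
    cases h
    simp only [mem_treesOf] at ha hb ha' hb'
    exact hpq (Prod.ext (by omega) (by omega))

end BB

namespace BTree

theorem reg_node (t₁ t₂ : BTree) :
    (node t₁ t₂).reg = if t₁.reg = t₂.reg then t₁.reg + 1 else max t₁.reg t₂.reg := rfl

theorem one_le_branches (t : BTree) (r : ℕ) (h : t.reg = r) : 1 ≤ t.branches r := by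
  induction t with
  | leaf => simp [reg] at h; simp [branches, h]
  | node t₁ t₂ ih₁ ih₂ =>
      rw [branches]
      by_cases h1 : t₁.reg = r
      · have := ih₁ h1
        by_cases h2 : t₂.reg = r <;> simp [h, h1, h2] <;> omega
      · by_cases h2 : t₂.reg = r
        · have := ih₂ h2
          simp [h, h1, h2]; omega
        · simp [h, h1, h2]

theorem branches_node (t₁ t₂ : BTree) (r : ℕ) :
    (node t₁ t₂).branches r = t₁.branches r + t₂.branches r +
      if t₁.reg = t₂.reg ∧ r = t₁.reg + 1 then 1 else 0 := by
  rw [branches]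
  by_cases he : t₁.reg = t₂.reg
  · by_cases hr : r = t₁.reg + 1
    · have hR : (node t₁ t₂).reg = r := by rw [reg_node, if_pos he, hr]
      have h1 : ¬ t₁.reg = r := by omega
      have h2 : ¬ t₂.reg = r := by rw [← he]; omega
      rw [if_pos hR, if_neg (fun h => h1 h.2), if_neg (fun h => h2 h.2), if_pos ⟨he, hr⟩]
      omega
    · have hR : ¬ (node t₁ t₂).reg = r := by rw [reg_node, if_pos he]; omega
      rw [if_neg hR, if_neg (fun h => hR h.1), if_neg (fun h => hR h.1),
        if_neg (fun h => hr h.2)]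
      omega
  · have hcond : ¬ (t₁.reg = t₂.reg ∧ r = t₁.reg + 1) := fun h => he h.1
    rw [if_neg hcond]
    by_cases hR : (node t₁ t₂).reg = r
    · have hmax : max t₁.reg t₂.reg = r := by rw [reg_node, if_neg he] at hR; exact hR
      rcases Nat.le_total t₁.reg t₂.reg with hle | hle
      · have h2 : t₂.reg = r := by omega
        have h1 : ¬ t₁.reg = r := by omega
        have hb := one_le_branches t₂ r h2
        rw [if_pos hR, if_neg (fun h => h1 h.2), if_pos ⟨hR, h2⟩]
        omega
      · have h1 : t₁.reg = r := by omega
        have h2 : ¬ t₂.reg = r := by omega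
        have hb := one_le_branches t₁ r h1
        rw [if_pos hR, if_pos ⟨hR, h1⟩, if_neg (fun h => h2 h.2)]
        omega
    · rw [if_neg hR, if_neg (fun h => hR h.1), if_neg (fun h => hR h.1)]
      omega

theorem branches_eq_zero (t : BTree) (r : ℕ) (h : t.reg < r) : t.branches r = 0 := by
  induction t with
  | leaf => simp only [reg] at h; simp [branches]; omega
  | node t₁ t₂ ih₁ ih₂ =>
      rw [reg_node] at h
      rw [branches_node]
      by_cases he : t₁.reg = t₂.reg
      · rw [if_pos he] at h
        rw [ih₁ (by omega), ih₂ (by omega), if_neg (by omega)]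
      · rw [if_neg he] at h
        rw [ih₁ (by omega), ih₂ (by omega), if_neg (by rintro ⟨h1, _⟩; exact he h1)]

theorem reg_le_size (t : BTree) : t.reg ≤ t.size := by
  induction t with
  | leaf => simp [reg, size]
  | node t₁ t₂ ih₁ ih₂ =>
      rw [reg_node, size]
      by_cases he : t₁.reg = t₂.reg <;> simp [he] <;> omega

theorem totalBranches_eq_sum (t : BTree) (N : ℕ) (h : t.reg ≤ N) :
    t.totalBranches = ∑ r ∈ Finset.range (N + 1), t.branches r := by
  rw [totalBranches]
  apply Finset.sum_subset
  · exact Finset.range_subset_range.2 (by omega)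
  · intro r _ hr
    simp only [Finset.mem_range] at hr
    exact branches_eq_zero t r (by omega)

theorem reg_eq_zero_iff (t : BTree) : t.reg = 0 ↔ t = leaf := by
  cases t with
  | leaf => simp [reg]
  | node t₁ t₂ =>
      simp only [reg_node]
      constructor
      · intro h
        by_cases he : t₁.reg = t₂.reg
        · rw [if_pos he] at h; omega
        · rw [if_neg he] at h
          exfalso; apply he
          have := Nat.max_eq_zero_iff.mp h
          omega
      · intro h; exact absurd h (by simp)

end BTree

namespace BB
open BTree Finset PowerSeries

noncomputable def Cs : PowerSeries ℝ := PowerSeries.mk fun n => ∑ _t ∈ treesOf n, (1 : ℝ)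

noncomputable def Es (q : ℕ) : PowerSeries ℝ :=
  PowerSeries.mk fun n => ∑ t ∈ treesOf n, if t.reg = q then (1 : ℝ) else 0

noncomputable def Ls (q : ℕ) : PowerSeries ℝ :=
  PowerSeries.mk fun n => ∑ t ∈ treesOf n, if t.reg ≤ q then (1 : ℝ) else 0

noncomputable def Ss (r : ℕ) : PowerSeries ℝ :=
  PowerSeries.mk fun n => ∑ t ∈ treesOf n, (t.branches r : ℝ)

theorem coeff_succ_X_mul_mul (f g : PowerSeries ℝ) (n : ℕ) :
    (PowerSeries.coeff (n + 1)) (X * (f * g)) =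
      ∑ ij ∈ antidiagonal n, (coeff ij.1 f) * (coeff ij.2 g) := by
  rw [coeff_succ_X_mul, coeff_mul]

theorem constantCoeff_Cs : constantCoeff Cs = 1 := by
  rw [Cs, ← coeff_zero_eq_constantCoeff, coeff_mk]; simp

theorem constantCoeff_Ls (q : ℕ) : constantCoeff (Ls q) = 1 := by
  rw [Ls, ← coeff_zero_eq_constantCoeff, coeff_mk, treesOf_zero, Finset.sum_singleton,
    if_pos (by simp [reg])]

theorem FE_C : Cs = 1 + X * (Cs * Cs) := by
  ext n
  cases n with
  | zero => simp [Cs, coeff_mk]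
  | succ n =>
      rw [map_add, coeff_succ_X_mul_mul]
      simp only [Cs, coeff_mk, coeff_one, Nat.succ_ne_zero, if_false, zero_add]
      rw [sum_treesOf_succ]
      refine Finset.sum_congr rfl fun ij _ => ?_
      rw [Finset.sum_mul_sum]
      simp

theorem FE_E0 : Es 0 = 1 := by
  ext n
  cases n with
  | zero =>
      rw [Es, coeff_mk, treesOf_zero, Finset.sum_singleton, if_pos (by simp [reg])]
      simp
  | succ n =>
      simp only [Es, coeff_mk, coeff_one, Nat.succ_ne_zero, if_false]
      rw [sum_treesOf_succ]
      refine Finset.sum_eq_zero fun ij _ => Finset.sum_eq_zero fun t₁ _ =>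
        Finset.sum_eq_zero fun t₂ _ => ?_
      rw [if_neg]
      intro h
      exact absurd ((reg_eq_zero_iff _).mp h) (by simp)

theorem FE_L0 : Ls 0 = 1 := by
  have : Ls 0 = Es 0 := by
    rw [Ls, Es]
    exact congrArg _ (funext fun n => Finset.sum_congr rfl fun t _ => by simp [Nat.le_zero])
  rw [this, FE_E0]

theorem FE_Lsucc (q : ℕ) : Ls (q + 1) = Ls q + Es (q + 1) := by
  ext n
  rw [map_add]
  simp only [Ls, Es, coeff_mk, ← Finset.sum_add_distrib]
  refine Finset.sum_congr rfl fun t _ => ?_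
  by_cases h1 : t.reg ≤ q
  · rw [if_pos (by omega), if_pos h1, if_neg (by omega)]; ring
  · by_cases h2 : t.reg = q + 1
    · rw [if_pos (by omega), if_neg h1, if_pos h2]; ring
    · rw [if_neg (by omega), if_neg h1, if_neg h2]; ring

theorem ind_reg_node_nat (t₁ t₂ : BTree) (q : ℕ) :
    (if (node t₁ t₂).reg = q + 1 then (1 : ℕ) else 0) =
      (if t₁.reg = q + 1 then (1 : ℕ) else 0) * (if t₂.reg ≤ q then (1 : ℕ) else 0)
      + (if t₁.reg ≤ q then (1 : ℕ) else 0) * (if t₂.reg = q + 1 then (1 : ℕ) else 0)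
      + (if t₁.reg = q then (1 : ℕ) else 0) * (if t₂.reg = q then (1 : ℕ) else 0) := by
  rw [reg_node]
  split_ifs <;> omega

theorem ind_reg_node (t₁ t₂ : BTree) (q : ℕ) :
    (if (node t₁ t₂).reg = q + 1 then (1 : ℝ) else 0) =
      (if t₁.reg = q + 1 then (1 : ℝ) else 0) * (if t₂.reg ≤ q then (1 : ℝ) else 0)
      + (if t₁.reg ≤ q then (1 : ℝ) else 0) * (if t₂.reg = q + 1 then (1 : ℝ) else 0)
      + (if t₁.reg = q then (1 : ℝ) else 0) * (if t₂.reg = q then (1 : ℝ) else 0) := by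
  have h := ind_reg_node_nat t₁ t₂ q
  have := congrArg (fun k : ℕ => (k : ℝ)) h
  push_cast at this
  simpa using this

theorem FE_E (q : ℕ) :
    Es (q + 1) = X * (Es (q + 1) * Ls q + Ls q * Es (q + 1) + Es q * Es q) := by
  ext n
  cases n with
  | zero =>
      rw [Es, coeff_mk, treesOf_zero, Finset.sum_singleton, if_neg (by simp [reg])]
      simp
  | succ n =>
      rw [coeff_succ_X_mul, map_add, map_add, coeff_mul, coeff_mul, coeff_mul,
        ← Finset.sum_add_distrib, ← Finset.sum_add_distrib]
      simp only [Es, Ls, coeff_mk]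
      rw [sum_treesOf_succ]
      refine Finset.sum_congr rfl fun ij _ => ?_
      rw [Finset.sum_mul_sum, Finset.sum_mul_sum, Finset.sum_mul_sum,
        ← Finset.sum_add_distrib, ← Finset.sum_add_distrib]
      refine Finset.sum_congr rfl fun t₁ _ => ?_
      rw [← Finset.sum_add_distrib, ← Finset.sum_add_distrib]
      exact Finset.sum_congr rfl fun t₂ _ => ind_reg_node t₁ t₂ q

theorem FE_S0 : Ss 0 = 1 + X * (Cs * Ss 0 + Ss 0 * Cs) := by
  ext n
  cases n with
  | zero => simp [Ss, coeff_mk, branches]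
  | succ n =>
      rw [map_add, coeff_succ_X_mul, map_add, coeff_mul, coeff_mul, ← Finset.sum_add_distrib]
      simp only [Ss, Cs, coeff_mk, coeff_one, Nat.succ_ne_zero, if_false, zero_add]
      rw [sum_treesOf_succ]
      refine Finset.sum_congr rfl fun ij _ => ?_
      rw [Finset.sum_mul_sum, Finset.sum_mul_sum, ← Finset.sum_add_distrib]
      refine Finset.sum_congr rfl fun t₁ _ => ?_
      rw [← Finset.sum_add_distrib]
      refine Finset.sum_congr rfl fun t₂ _ => ?_
      rw [branches_node, if_neg (by omega)]
      push_cast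
      ring

theorem FE_S (r : ℕ) :
    Ss (r + 1) = X * (Cs * Ss (r + 1) + Ss (r + 1) * Cs + Es r * Es r) := by
  ext n
  cases n with
  | zero => simp [Ss, coeff_mk, branches]
  | succ n =>
      rw [coeff_succ_X_mul, map_add, map_add, coeff_mul, coeff_mul, coeff_mul,
        ← Finset.sum_add_distrib, ← Finset.sum_add_distrib]
      simp only [Ss, Cs, Es, coeff_mk]
      rw [sum_treesOf_succ]
      refine Finset.sum_congr rfl fun ij _ => ?_
      rw [Finset.sum_mul_sum, Finset.sum_mul_sum, Finset.sum_mul_sum,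
        ← Finset.sum_add_distrib, ← Finset.sum_add_distrib]
      refine Finset.sum_congr rfl fun t₁ _ => ?_
      rw [← Finset.sum_add_distrib, ← Finset.sum_add_distrib]
      refine Finset.sum_congr rfl fun t₂ _ => ?_
      have hnat : (node t₁ t₂).branches (r + 1) = t₁.branches (r + 1) + t₂.branches (r + 1)
          + (if t₁.reg = r then 1 else 0) * (if t₂.reg = r then 1 else 0) := by
        rw [branches_node]
        congr 1
        split_ifs <;> omega
      rw [hnat]
      push_cast
      ring

end BB

namespace BB
open BTree Finset PowerSeries

noncomputable def Us : PowerSeries ℝ := X * (Cs * Cs)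

theorem hCU : Cs = 1 + Us := FE_C

theorem hXU : X * (1 + Us) ^ 2 = Us := by
  rw [← hCU, Us]; ring

theorem PS_ne_zero {f : PowerSeries ℝ} (h : constantCoeff f ≠ 0) : f ≠ 0 :=
  fun hf => h (by rw [hf, map_zero])

theorem constantCoeff_Us : constantCoeff Us = 0 := by
  rw [Us, map_mul, constantCoeff_X, zero_mul]

theorem one_sub_Us_sq_ne : (1 : PowerSeries ℝ) - Us ^ 2 ≠ 0 := by
  apply PS_ne_zero
  rw [map_sub, map_one, map_pow, constantCoeff_Us]
  norm_num

theorem closedEL (q : ℕ) :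
    Es q * (1 - (Us ^ 2 ^ q) ^ 2) = (1 - Us ^ 2) * Us ^ (2 ^ q - 1) ∧
    Ls q * (1 - (Us ^ 2 ^ q) ^ 2) =
      (1 + Us) * (1 - (Us ^ 2 ^ q) ^ 2) - (1 - Us ^ 2) * (Us ^ (2 ^ q - 1) * Us ^ 2 ^ q) := by
  induction q with
  | zero =>
      rw [FE_E0, FE_L0]
      norm_num
      ring
  | succ q ih =>
      obtain ⟨hP, hB⟩ := ih
      have hE := FE_E q
      have hx := hXU
      have h1 : 1 ≤ 2 ^ q := Nat.one_le_two_pow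
      have ha : Us ^ 2 ^ q = Us ^ (2 ^ q - 1) * Us := by
        rw [← pow_succ]
        congr 1
        omega
      have hpow1 : Us ^ 2 ^ (q + 1) = (Us ^ 2 ^ q) ^ 2 := by
        rw [← pow_mul, pow_succ]
      have hpow2 : Us ^ (2 ^ (q + 1) - 1) = (Us ^ (2 ^ q - 1)) ^ 2 * Us := by
        rw [← pow_mul, ← pow_succ]
        congr 1
        have h2 : 2 ^ (q + 1) = 2 * 2 ^ q := by rw [pow_succ]; ring
        omega
      have hEq : Es (q + 1) * (1 - (Us ^ 2 ^ (q + 1)) ^ 2) = (1 - Us ^ 2) * Us ^ (2 ^ (q + 1) - 1) := by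
        rw [hpow1, hpow2]
        apply mul_left_cancel₀ one_sub_Us_sq_ne
        linear_combination
          ((1 - (Us ^ 2 ^ q) ^ 2) ^ 2 * (1 + Us) ^ 2) * hE
          + (2 * X * (1 + Us) ^ 2 * (Es (q + 1) * (1 - (Us ^ 2 ^ q) ^ 2))) * hB
          + (X * (1 + Us) ^ 2 * ((1 - (Us ^ 2 ^ q) ^ 2) * Es q + (1 - Us ^ 2) * Us ^ (2 ^ q - 1))) * hP
          + (2 * (Es (q + 1) * (1 - (Us ^ 2 ^ q) ^ 2)) *
              ((1 + Us) * (1 - (Us ^ 2 ^ q) ^ 2) - (1 - Us ^ 2) * Us ^ (2 ^ q - 1) * Us ^ 2 ^ q)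
            + (1 - Us ^ 2) ^ 2 * (Us ^ (2 ^ q - 1)) ^ 2) * hx
          + (2 * (Es (q + 1) * (1 - (Us ^ 2 ^ q) ^ 2)) * Us ^ 2 ^ q * (1 - Us ^ 2)) * ha
      refine ⟨hEq, ?_⟩
      rw [FE_Lsucc, hpow1, hpow2]
      rw [hpow1, hpow2] at hEq
      linear_combination (1 + (Us ^ 2 ^ q) ^ 2) * hB + hEq
        - ((1 - Us ^ 2) * Us ^ (2 ^ q - 1) * (1 + (Us ^ 2 ^ q) ^ 2)) * ha

theorem closedS : ∀ r : ℕ, Ss r * (1 - Us ^ 2 ^ r) ^ 2 = (1 - Us ^ 2) * Us ^ (2 ^ r - 1)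
  | 0 => by
      have hS := FE_S0
      rw [hCU] at hS
      norm_num
      linear_combination ((1 - Us) * (1 + Us)) * hS + (2 * Ss 0 * (1 - Us)) * hXU
  | (r + 1) => by
      have hS := FE_S r
      rw [hCU] at hS
      have hP := (closedEL r).1
      have h1 : 1 ≤ 2 ^ r := Nat.one_le_two_pow
      have hpow1 : Us ^ 2 ^ (r + 1) = (Us ^ 2 ^ r) ^ 2 := by
        rw [← pow_mul, pow_succ]
      have hpow2 : Us ^ (2 ^ (r + 1) - 1) = (Us ^ (2 ^ r - 1)) ^ 2 * Us := by
        rw [← pow_mul, ← pow_succ]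
        congr 1
        have h2 : 2 ^ (r + 1) = 2 * 2 ^ r := by rw [pow_succ]; ring
        omega
      rw [hpow1, hpow2]
      apply mul_left_cancel₀ one_sub_Us_sq_ne
      linear_combination
        ((1 - (Us ^ 2 ^ r) ^ 2) ^ 2 * (1 + Us) ^ 2) * hS
        + (2 * Ss (r + 1) * (1 - (Us ^ 2 ^ r) ^ 2) ^ 2 * (1 + Us)
            + (1 - Us ^ 2) ^ 2 * (Us ^ (2 ^ r - 1)) ^ 2) * hXU
        + (X * (1 + Us) ^ 2 * ((1 - (Us ^ 2 ^ r) ^ 2) * Es r + (1 - Us ^ 2) * Us ^ (2 ^ r - 1))) * hP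

end BB

namespace BB
open BTree Finset PowerSeries

/-- real-valued zchoose -/
noncomputable def zc (N : ℕ) (k : ℤ) : ℝ := (zchoose N k : ℝ)

theorem zc_neg {N : ℕ} {k : ℤ} (h : k < 0) : zc N k = 0 := by
  rw [zc, zchoose, if_neg (by omega)]; norm_num

theorem zc_ofNat (N j : ℕ) : zc N (j : ℤ) = (N.choose j : ℝ) := by
  rw [zc, zchoose, if_pos (by positivity)]
  norm_num

theorem zc_pascal (N : ℕ) (k : ℤ) : zc (N + 1) k = zc N k + zc N (k - 1) := by
  rcases lt_trichotomy k 0 with h | h | h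
  · rw [zc_neg h, zc_neg h, zc_neg (by omega)]; norm_num
  · subst h
    rw [show (0:ℤ) = ((0:ℕ):ℤ) from rfl, zc_ofNat, zc_ofNat, zc_neg (by norm_num)]
    simp
  · obtain ⟨j, rfl⟩ : ∃ j : ℕ, k = (j : ℤ) + 1 := ⟨(k - 1).toNat, by omega⟩
    rw [show ((j:ℤ) + 1) = ((j + 1 : ℕ) : ℤ) from by push_cast; ring, zc_ofNat, zc_ofNat,
      show ((j + 1 : ℕ) : ℤ) - 1 = ((j : ℕ) : ℤ) from by push_cast; ring, zc_ofNat,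
      Nat.choose_succ_succ]
    push_cast
    ring

theorem zc_symm_succ (ν : ℕ) : zc (2 * ν + 1) ((ν : ℤ) + 1) = zc (2 * ν + 1) (ν : ℤ) := by
  rw [show ((ν:ℤ) + 1) = ((ν + 1 : ℕ) : ℤ) from by push_cast; ring, zc_ofNat, zc_ofNat]
  have h : (2 * ν + 1) - (ν + 1) = ν := by omega
  rw [← Nat.choose_symm (by omega : ν + 1 ≤ 2 * ν + 1), h]

theorem Cs_pow_rec (m : ℕ) : Cs ^ (m + 1) = Cs ^ m + X * Cs ^ (m + 2) :=
  calc Cs ^ (m + 1) = Cs ^ m * Cs := by ring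
  _ = Cs ^ m * (1 + X * (Cs * Cs)) := by rw [← FE_C]
  _ = Cs ^ m + X * Cs ^ (m + 2) := by ring

theorem coeff_Cs_pow : ∀ ν m : ℕ,
    coeff ν (Cs ^ (m + 1)) = zc (2 * ν + m) (ν : ℤ) - zc (2 * ν + m) ((ν : ℤ) - 1) := by
  intro ν
  induction ν with
  | zero =>
      intro m
      rw [coeff_zero_eq_constantCoeff, map_pow, constantCoeff_Cs, one_pow]
      norm_num [zc, zchoose]
  | succ ν ihν =>
      intro m
      induction m with
      | zero =>
          rw [Cs_pow_rec 0, map_add, pow_zero, coeff_one, if_neg (Nat.succ_ne_zero ν),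
            coeff_succ_X_mul, ihν 1]
          have h1 := zc_pascal (2 * ν + 1) ((ν : ℤ) + 1)
          have h2 := zc_pascal (2 * ν + 1) (ν : ℤ)
          have h3 := zc_symm_succ ν
          have e1 : 2 * (ν + 1) + 0 = (2 * ν + 1) + 1 := by omega
          rw [e1]
          push_cast
          rw [show ((ν:ℤ) + 1 - 1) = (ν : ℤ) from by ring] at h1 ⊢
          linarith
      | succ m ihm =>
          rw [Cs_pow_rec (m + 1), map_add, coeff_succ_X_mul, ihm, ihν (m + 2)]
          have h1 := zc_pascal (2 * ν + m + 2) ((ν : ℤ) + 1)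
          have h2 := zc_pascal (2 * ν + m + 2) (ν : ℤ)
          have e1 : 2 * (ν + 1) + (m + 1) = (2 * ν + m + 2) + 1 := by omega
          have e2 : 2 * (ν + 1) + m = 2 * ν + m + 2 := by omega
          have e3 : 2 * ν + (m + 2) = 2 * ν + m + 2 := by omega
          rw [e1, e2, e3]
          push_cast
          rw [show ((ν:ℤ) + 1 - 1) = (ν : ℤ) from by ring] at h1 ⊢
          linarith

end BB

namespace BB
open BTree Finset PowerSeries

theorem Us_pow_eq (k : ℕ) : Us ^ k = X ^ k * Cs ^ (2 * k) := by
  rw [Us, mul_pow, mul_pow, two_mul, pow_add]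

theorem coeff_X_pow_mul_of_lt (f : PowerSeries ℝ) (K n : ℕ) (h : n < K) :
    coeff n (X ^ K * f) = 0 := by
  rw [coeff_mul]
  refine Finset.sum_eq_zero fun ij hij => ?_
  rw [Finset.HasAntidiagonal.mem_antidiagonal] at hij
  rw [coeff_X_pow, if_neg (by omega), zero_mul]

theorem coeff_Us_pow (k n : ℕ) :
    coeff n (Us ^ k) = zc (2 * n - 1) ((n : ℤ) - k) - zc (2 * n - 1) ((n : ℤ) - k - 1) := by
  rcases Nat.lt_or_ge n k with h | h
  · rw [Us_pow_eq, coeff_X_pow_mul_of_lt _ _ _ h, zc_neg (by omega), zc_neg (by omega)]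
    norm_num
  · -- k ≤ n
    rcases Nat.eq_zero_or_pos k with rfl | hk
    · simp only [pow_zero, coeff_one]
      rcases Nat.eq_zero_or_pos n with rfl | hn
      · norm_num [zc, zchoose]
      · rw [if_neg (by omega)]
        have h2 : ((n : ℤ) - ((0:ℕ):ℤ) - 1) = ((n - 1 : ℕ) : ℤ) := by
          push_cast [Nat.cast_sub hn]; ring
        have h1 : ((n : ℤ) - ((0:ℕ):ℤ)) = ((n : ℕ) : ℤ) := by push_cast; ring
        rw [h2, h1, zc_ofNat, zc_ofNat]
        have hsym : (2 * n - 1).choose n = (2 * n - 1).choose (n - 1) := by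
          have hle : n ≤ 2 * n - 1 := by omega
          have : (2 * n - 1) - n = n - 1 := by omega
          rw [← Nat.choose_symm hle, this]
        rw [hsym]
        ring
    · -- 1 ≤ k ≤ n
      obtain ⟨d, rfl⟩ : ∃ d, n = d + k := ⟨n - k, by omega⟩
      rw [Us_pow_eq, mul_comm (X ^ k), coeff_mul_X_pow]
      have h2k : 2 * k = (2 * k - 1) + 1 := by omega
      rw [h2k, coeff_Cs_pow d (2 * k - 1)]
      have e1 : 2 * d + (2 * k - 1) = 2 * (d + k) - 1 := by omega
      have g1 : ((d : ℕ) : ℤ) = ((d + k : ℕ) : ℤ) - k := by push_cast; ring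
      rw [e1, g1]

/-- The explicit k-th difference coefficient. -/
noncomputable def dR (n k : ℕ) : ℝ :=
  zc (2 * n) ((n : ℤ) + 1 - k) - 2 * zc (2 * n) ((n : ℤ) - k) + zc (2 * n) ((n : ℤ) - 1 - k)

theorem dR_eq_zero {n k : ℕ} (h : n + 1 < k) : dR n k = 0 := by
  rw [dR, zc_neg (show (n:ℤ) + 1 - (k:ℤ) < 0 by omega),
    zc_neg (show (n:ℤ) - (k:ℤ) < 0 by omega),
    zc_neg (show (n:ℤ) - 1 - (k:ℤ) < 0 by omega)]
  ring

theorem coeff_one_sub_sq_mul (n k : ℕ) (hk : 1 ≤ k) :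
    coeff n ((1 - Us ^ 2) * Us ^ (k - 1)) = dR n k := by
  rcases Nat.eq_zero_or_pos n with rfl | hn
  · rw [coeff_zero_eq_constantCoeff, map_mul, map_sub, map_one, map_pow, map_pow,
      constantCoeff_Us]
    rcases Nat.eq_or_lt_of_le hk with rfl | hk1
    · norm_num [dR, zc, zchoose]
    · rw [zero_pow (show k - 1 ≠ 0 by omega), dR_eq_zero (show 0 + 1 < k by omega)]
      norm_num
  · have hsplit : (1 - Us ^ 2) * Us ^ (k - 1) = Us ^ (k - 1) - Us ^ (k + 1) := by
      have h2 : (k - 1) + 2 = k + 1 := by omega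
      calc (1 - Us ^ 2) * Us ^ (k - 1) = Us ^ (k - 1) - Us ^ ((k - 1) + 2) := by
            rw [pow_add]; ring
        _ = Us ^ (k - 1) - Us ^ (k + 1) := by rw [h2]
    rw [hsplit, map_sub, coeff_Us_pow, coeff_Us_pow, dR]
    have e4 : ((n : ℤ) - ((k - 1 : ℕ) : ℤ)) = (n : ℤ) + 1 - k := by
      push_cast [Nat.cast_sub hk]; ring
    have e6 : ((n : ℤ) - ((k + 1 : ℕ) : ℤ)) = (n : ℤ) - k - 1 := by push_cast; ring
    rw [e4, e6]
    have hpas : ∀ j : ℤ, zc (2 * n) j = zc (2 * n - 1) j + zc (2 * n - 1) (j - 1) := by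
      intro j
      have h1 : 2 * n = (2 * n - 1) + 1 := by omega
      conv_lhs => rw [h1]
      exact zc_pascal _ j
    rw [hpas ((n : ℤ) + 1 - k), hpas ((n : ℤ) - k), hpas ((n : ℤ) - 1 - k)]
    set M := 2 * n - 1
    have q1 : zc M ((n : ℤ) + 1 - k - 1) = zc M ((n : ℤ) - k) := congrArg (zc M) (by ring)
    have q2 : zc M ((n : ℤ) - 1 - k) = zc M ((n : ℤ) - k - 1) := congrArg (zc M) (by ring)
    have q3 : zc M ((n : ℤ) - 1 - k - 1) = zc M ((n : ℤ) - k - 1 - 1) := congrArg (zc M) (by ring)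
    rw [q1, q2, q3]
    ring

/-- Truncated geometric-square series identity. -/
theorem geom_trunc (V : PowerSeries ℝ) (N : ℕ) :
    (1 - V) ^ 2 * (∑ j ∈ Finset.range (N + 1), ((j : PowerSeries ℝ) + 1) * V ^ j) =
      1 - ((N : PowerSeries ℝ) + 2) * V ^ (N + 1) + ((N : PowerSeries ℝ) + 1) * V ^ (N + 2) := by
  induction N with
  | zero =>
      push_cast [Finset.sum_range_one]
      try ring
  | succ N ih =>
      rw [Finset.sum_range_succ, mul_add, ih]
      push_cast
      ring

theorem coeff_nat
    (m n : ℕ) (g : PowerSeries ℝ) :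
    coeff n (((m : PowerSeries ℝ) + 1) * g) = ((m : ℝ) + 1) * coeff n g := by
  have : ((m : PowerSeries ℝ) + 1) = C ((m : ℝ) + 1) := by
    rw [map_add, map_one, map_natCast]
  rw [this, coeff_C_mul]

theorem coeff_Ss (r n : ℕ) :
    coeff n (Ss r) = ∑ j ∈ Finset.range (n + 1), ((j : ℝ) + 1) * dR n ((j + 1) * 2 ^ r) := by
  have hm : 1 ≤ 2 ^ r := Nat.one_le_two_pow
  have hQ := closedS r
  set V := Us ^ 2 ^ r with hV
  have key : Ss r = (1 - Us ^ 2) * Us ^ (2 ^ r - 1) *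
        (∑ j ∈ Finset.range (n + 1), ((j : PowerSeries ℝ) + 1) * V ^ j)
      + Ss r * (((n : PowerSeries ℝ) + 2) * V ^ (n + 1) - ((n : PowerSeries ℝ) + 1) * V ^ (n + 2)) := by
    have h2 := geom_trunc V n
    calc Ss r = Ss r * ((1 - V) ^ 2 * (∑ j ∈ Finset.range (n + 1), ((j : PowerSeries ℝ) + 1) * V ^ j))
          + Ss r * (((n : PowerSeries ℝ) + 2) * V ^ (n + 1) - ((n : PowerSeries ℝ) + 1) * V ^ (n + 2)) := by
          rw [h2]; ring
      _ = _ := by rw [← mul_assoc, hQ]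
  rw [key, map_add]
  have hzero : coeff n (Ss r * (((n : PowerSeries ℝ) + 2) * V ^ (n + 1)
      - ((n : PowerSeries ℝ) + 1) * V ^ (n + 2))) = 0 := by
    have hbig : ∀ M : ℕ, n < M → ∀ f : PowerSeries ℝ, coeff n (f * V ^ M) = 0 := by
      intro M hM f
      rw [hV, ← pow_mul, Us_pow_eq, ← mul_assoc]
      rw [mul_comm f (X ^ (2 ^ r * M)), mul_assoc]
      apply coeff_X_pow_mul_of_lt
      calc n < M := hM
        _ ≤ 2 ^ r * M := Nat.le_mul_of_pos_left M (by positivity)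
    have h1 : Ss r * (((n : PowerSeries ℝ) + 2) * V ^ (n + 1) - ((n : PowerSeries ℝ) + 1) * V ^ (n + 2))
        = (Ss r * ((n : PowerSeries ℝ) + 2)) * V ^ (n + 1)
          - (Ss r * ((n : PowerSeries ℝ) + 1)) * V ^ (n + 2) := by ring
    rw [h1, map_sub, hbig (n + 1) (by omega), hbig (n + 2) (by omega)]
    ring
  rw [hzero, add_zero, Finset.mul_sum, map_sum]
  refine Finset.sum_congr rfl fun j _ => ?_
  have hassoc : (1 - Us ^ 2) * Us ^ (2 ^ r - 1) * (((j : PowerSeries ℝ) + 1) * V ^ j)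
      = ((j : PowerSeries ℝ) + 1) * ((1 - Us ^ 2) * Us ^ ((j + 1) * 2 ^ r - 1)) := by
    have hexp : Us ^ (2 ^ r - 1) * V ^ j = Us ^ ((j + 1) * 2 ^ r - 1) := by
      rw [hV, ← pow_mul, ← pow_add]
      congr 1
      obtain ⟨m', hm'⟩ : ∃ m', 2 ^ r = m' + 1 := ⟨2 ^ r - 1, by omega⟩
      rw [hm', Nat.succ_sub_one]
      have h2 : (j + 1) * (m' + 1) = (m' + (m' + 1) * j) + 1 := by ring
      rw [h2, Nat.add_sub_cancel]
    calc (1 - Us ^ 2) * Us ^ (2 ^ r - 1) * (((j : PowerSeries ℝ) + 1) * V ^ j)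
        = ((j : PowerSeries ℝ) + 1) * ((1 - Us ^ 2) * (Us ^ (2 ^ r - 1) * V ^ j)) := by ring
      _ = _ := by rw [hexp]
  rw [hassoc, coeff_nat, coeff_one_sub_sq_mul n ((j + 1) * 2 ^ r) (Nat.one_le_iff_ne_zero.mpr (by positivity))]

end BB

namespace BB
open BTree Finset PowerSeries

/-- Sum of total branches over all trees of size n, as a real number. -/
noncomputable def Fn (n : ℕ) : ℝ := ∑ t ∈ treesOf n, (t.totalBranches : ℝ)

theorem Fn_eq_sum_coeff (n : ℕ) : Fn n = ∑ r ∈ Finset.range (n + 1), coeff n (Ss r) := by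
  rw [Fn]
  have h1 : ∀ t ∈ treesOf n, (t.totalBranches : ℝ)
      = ∑ r ∈ Finset.range (n + 1), (t.branches r : ℝ) := by
    intro t ht
    rw [mem_treesOf] at ht
    rw [totalBranches_eq_sum t n (le_trans (reg_le_size t) (le_of_eq ht))]
    push_cast
    rfl
  rw [Finset.sum_congr rfl h1, Finset.sum_comm]
  exact Finset.sum_congr rfl fun r _ => by rw [Ss, coeff_mk]

theorem coeff_Ss_Icc (r n : ℕ) :
    coeff n (Ss r) = ∑ k ∈ Finset.Icc 1 (n + 1), (k : ℝ) * dR n (k * 2 ^ r) := by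
  rw [coeff_Ss, ← Finset.Ico_add_one_right_eq_Icc, Finset.sum_Ico_eq_sum_range]
  try simp only [Nat.add_sub_cancel]
  refine Finset.sum_congr rfl fun j _ => ?_
  have e : 1 + j = j + 1 := by omega
  rw [e]
  push_cast
  ring

theorem per_r (n r : ℕ) :
    ∑ k ∈ Finset.Icc 1 (n + 1), (k : ℝ) * dR n (k * 2 ^ r)
      = ∑ m ∈ Finset.Icc 1 (n + 1), (if 2 ^ r ∣ m then ((m / 2 ^ r : ℕ) : ℝ) else 0) * dR n m := by
  have h2r : 0 < 2 ^ r := by positivity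
  have hRHS : ∑ m ∈ Finset.Icc 1 (n + 1), (if 2 ^ r ∣ m then ((m / 2 ^ r : ℕ) : ℝ) else 0) * dR n m
      = ∑ m ∈ (Finset.Icc 1 (n + 1)).filter (fun m => 2 ^ r ∣ m),
          ((m / 2 ^ r : ℕ) : ℝ) * dR n m := by
    rw [Finset.sum_filter]
    exact Finset.sum_congr rfl fun m _ => by split_ifs <;> simp
  have hLHS : ∑ k ∈ Finset.Icc 1 (n + 1), (k : ℝ) * dR n (k * 2 ^ r)
      = ∑ k ∈ (Finset.Icc 1 (n + 1)).filter (fun k => k * 2 ^ r ≤ n + 1),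
          (k : ℝ) * dR n (k * 2 ^ r) := by
    symm
    apply Finset.sum_subset (Finset.filter_subset _ _)
    intro k hk hk'
    simp only [Finset.mem_filter, Finset.mem_Icc] at hk hk'
    rw [dR_eq_zero (by omega), mul_zero]
  rw [hLHS, hRHS]
  refine Finset.sum_nbij' (fun k => k * 2 ^ r) (fun m => m / 2 ^ r) ?_ ?_ ?_ ?_ ?_
  · intro k hk
    simp only [Finset.mem_filter, Finset.mem_Icc] at hk ⊢
    refine ⟨⟨?_, hk.2⟩, ⟨k, mul_comm k (2 ^ r)⟩⟩
    calc 1 ≤ k := hk.1.1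
      _ ≤ k * 2 ^ r := Nat.le_mul_of_pos_right k h2r
  · intro m hm
    simp only [Finset.mem_filter, Finset.mem_Icc] at hm ⊢
    obtain ⟨⟨hm1, hm2⟩, hdvd⟩ := hm
    have hle : 2 ^ r ≤ m := Nat.le_of_dvd (by omega) hdvd
    refine ⟨⟨?_, ?_⟩, ?_⟩
    · exact Nat.one_le_div_iff h2r |>.mpr hle
    · calc m / 2 ^ r ≤ m := Nat.div_le_self m _
        _ ≤ n + 1 := hm2
    · rw [Nat.div_mul_cancel hdvd]; exact hm2
  · intro k _; exact Nat.mul_div_cancel k h2r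
  · intro m hm
    simp only [Finset.mem_filter] at hm
    exact Nat.div_mul_cancel hm.2
  · intro k _
    rw [Nat.mul_div_cancel k h2r]

theorem weight_sum (n k : ℕ) (hn : 1 ≤ n) (hk1 : 1 ≤ k) (hk2 : k ≤ n + 1) :
    (∑ r ∈ Finset.range (n + 1), (if 2 ^ r ∣ k then ((k / 2 ^ r : ℕ) : ℝ) else 0))
      = (2 - (2 : ℝ) ^ (-(padicValNat 2 k : ℤ))) * (k : ℝ) := by
  set v := padicValNat 2 k with hv
  have hk0 : k ≠ 0 := by omega
  have hdvd_iff : ∀ r : ℕ, 2 ^ r ∣ k ↔ r ≤ v := by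
    intro r
    rw [Nat.Prime.pow_dvd_iff_le_factorization Nat.prime_two hk0,
      Nat.factorization_def k Nat.prime_two]
  have hvlen : v ≤ n := by
    have h1 : 2 ^ v ∣ k := (hdvd_iff v).mpr le_rfl
    have h2 : 2 ^ v ≤ k := Nat.le_of_dvd (by omega) h1
    have h3 : n + 1 ≤ 2 ^ n := Nat.lt_two_pow_self
    by_contra hc
    have : 2 ^ (n + 1) ≤ 2 ^ v := Nat.pow_le_pow_right (by omega) (by omega)
    have : 2 ^ n < 2 ^ (n + 1) := Nat.pow_lt_pow_right (by omega) (by omega)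
    omega
  have hsub : ∑ r ∈ Finset.range (n + 1), (if 2 ^ r ∣ k then ((k / 2 ^ r : ℕ) : ℝ) else 0)
      = ∑ r ∈ Finset.range (v + 1), ((k / 2 ^ r : ℕ) : ℝ) := by
    rw [← Finset.sum_filter]
    apply Finset.sum_congr
    · ext r
      simp only [Finset.mem_filter, Finset.mem_range, hdvd_iff r]
      omega
    · intro r _; rfl
  rw [hsub]
  have hcast : ∀ r ∈ Finset.range (v + 1), ((k / 2 ^ r : ℕ) : ℝ) = (k : ℝ) * (1 / 2) ^ r := by
    intro r hr
    simp only [Finset.mem_range] at hr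
    rw [Nat.cast_div ((hdvd_iff r).mpr (by omega)) (by positivity)]
    rw [div_pow, one_pow]
    push_cast
    ring
  rw [Finset.sum_congr rfl hcast, ← Finset.mul_sum,
    geom_sum_eq (by norm_num : (1/2 : ℝ) ≠ 1) (v + 1)]
  have h2v : ((2 : ℝ) ^ v) ≠ 0 := by positivity
  rw [zpow_neg, zpow_natCast]
  field_simp
  have hh : (1/2:ℝ)^v * 2^v = 1 := by rw [← mul_pow]; norm_num
  linear_combination hh

theorem Fn_eq_target (n : ℕ) (hn : 1 ≤ n) :
    Fn n = ∑ k ∈ Finset.Icc 1 (n + 1),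
      (2 - (2 : ℝ) ^ (-(padicValNat 2 k : ℤ))) * (k : ℝ) * dR n k := by
  rw [Fn_eq_sum_coeff]
  have h1 : ∀ r ∈ Finset.range (n + 1), coeff n (Ss r)
      = ∑ m ∈ Finset.Icc 1 (n + 1), (if 2 ^ r ∣ m then ((m / 2 ^ r : ℕ) : ℝ) else 0) * dR n m :=
    fun r _ => (coeff_Ss_Icc r n).trans (per_r n r)
  rw [Finset.sum_congr rfl h1, Finset.sum_comm]
  refine Finset.sum_congr rfl fun k hk => ?_
  simp only [Finset.mem_Icc] at hk
  rw [← Finset.sum_mul, weight_sum n k hn hk.1 hk.2]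

end BB

namespace BB
open BTree Finset

theorem catalan_cast_eq (n : ℕ) :
    ((n : ℝ) + 1) * (catalan n : ℝ) = (Nat.choose (2 * n) n : ℝ) := by
  have h := succ_mul_catalan_eq_centralBinom n
  have h2 : Nat.centralBinom n = Nat.choose (2 * n) n := rfl
  rw [h2] at h
  exact_mod_cast h

theorem catalan_cast_ne (n : ℕ) : (catalan n : ℝ) ≠ 0 := by
  have h := succ_mul_catalan_eq_centralBinom n
  have h2 := Nat.centralBinom_pos n
  have : catalan n ≠ 0 := by
    intro hc
    rw [hc] at h
    omega
  exact_mod_cast this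

theorem choose_cast_ne (n : ℕ) : (Nat.choose (2 * n) n : ℝ) ≠ 0 := by
  have : 0 < Nat.choose (2 * n) n := Nat.choose_pos (by omega)
  positivity

end BB


/-- Explicit formula for the expected total number of branches in binary trees of size
`n ≥ 1`:
`E_n = ((n+1)/binom(2n,n)) · Σ_{k=1}^{n+1} (2 - 2^{-v₂(k)})·k·[binom(2n, n+1-k)
  - 2·binom(2n, n-k) + binom(2n, n-1-k)]`,
where `v₂(k)` is the 2-adic valuation of `k`. -/
theorem totalBranchExpectation_explicit (n : ℕ) (hn : 1 ≤ n) :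
    totalBranchExpectation n =
      ((n : ℝ) + 1) / (Nat.choose (2 * n) n : ℝ) *
        ∑ k ∈ Finset.Icc 1 (n + 1),
          (2 - (2 : ℝ) ^ (-(padicValNat 2 k : ℤ))) * (k : ℝ) *
            ((zchoose (2 * n) ((n : ℤ) + 1 - k) : ℝ)
              - 2 * (zchoose (2 * n) ((n : ℤ) - k) : ℝ)
              + (zchoose (2 * n) ((n : ℤ) - 1 - k) : ℝ)) := by
  classical
  letI : Fintype {t : BTree // t.size = n} :=
    Fintype.subtype (BB.treesOf n) (fun t => BB.mem_treesOf)
  have htsum : (∑' t : {t : BTree // t.size = n}, (BTree.totalBranches t.1 : ℝ)) = BB.Fn n := by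
    rw [tsum_fintype, BB.Fn]
    exact (Finset.sum_subtype (BB.treesOf n) (fun t => BB.mem_treesOf)
      (fun t => (BTree.totalBranches t : ℝ))).symm
  rw [totalBranchExpectation, htsum, BB.Fn_eq_target n hn]
  have hbody : ∀ k ∈ Finset.Icc 1 (n + 1),
      (2 - (2 : ℝ) ^ (-(padicValNat 2 k : ℤ))) * (k : ℝ) * BB.dR n k
        = (2 - (2 : ℝ) ^ (-(padicValNat 2 k : ℤ))) * (k : ℝ) *
            ((zchoose (2 * n) ((n : ℤ) + 1 - k) : ℝ)
              - 2 * (zchoose (2 * n) ((n : ℤ) - k) : ℝ)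
              + (zchoose (2 * n) ((n : ℤ) - 1 - k) : ℝ)) := by
    intro k _
    rw [BB.dR, BB.zc, BB.zc, BB.zc]
  rw [Finset.sum_congr rfl hbody]
  set T := ∑ k ∈ Finset.Icc 1 (n + 1),
      (2 - (2 : ℝ) ^ (-(padicValNat 2 k : ℤ))) * (k : ℝ) *
        ((zchoose (2 * n) ((n : ℤ) + 1 - k) : ℝ)
          - 2 * (zchoose (2 * n) ((n : ℤ) - k) : ℝ)
          + (zchoose (2 * n) ((n : ℤ) - 1 - k) : ℝ)) with hT
  have h1 := BB.catalan_cast_eq n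
  have h2 := BB.catalan_cast_ne n
  have h3 := BB.choose_cast_ne n
  field_simp
  linear_combination (-T) * h1
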